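/- arXiv:2409.10182 — 3 statements merged into one kernel-verified Lean document; each statement's English description precedes it below -/
import Mathlib

section
/- For N prime and local dimension d, the trace of the momentum projector satisfies Tr(T_k) = d^N + d(N-1) if k = 0, and Tr(T_k) = d^N - d otherwise. -/
open Matrix Finset
open Fin.NatCast

/-- The cyclic shift (translation) operator `T` on `(ℂ^d)^{⊗N}`. -/
noncomputable def shiftT (d N : ℕ) [NeZero N] :
    Matrix (Fin N → Fin d) (Fin N → Fin d) ℂ :=
  Matrix.of fun r c => if r = (fun j => c (j - 1)) then 1 else 0

/-- `T_k = Σ_{j=0}^{N-1} e^{2πijk/N} T^j`. -/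
noncomputable def momProj (d N : ℕ) [NeZero N] (k : ℕ) :
    Matrix (Fin N → Fin d) (Fin N → Fin d) ℂ :=
  ∑ j ∈ Finset.range N,
    Complex.exp (2 * (Real.pi : ℂ) * Complex.I * (j : ℂ) * (k : ℂ) / (N : ℂ)) • shiftT d N ^ j

lemma shiftT_pow (d N : ℕ) [NeZero N] (j : ℕ) :
    shiftT d N ^ j = Matrix.of fun r c => if r = (fun i => c (i - (j : Fin N))) then 1 else 0 := by
  induction j with
  | zero =>
    ext r c
    simp [Matrix.one_apply]
  | succ j ih =>
    rw [pow_succ, ih]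
    ext r c
    rw [Matrix.mul_apply]
    simp only [Matrix.of_apply, shiftT]
    rw [Finset.sum_eq_single (fun i => c (i - 1))]
    · simp only [if_true, mul_one]
      congr 2
      funext i
      rw [sub_sub]
      congr 1
      push_cast
      ring
    · intro b _ hb
      rw [if_neg hb, mul_zero]
    · intro h; exact absurd (Finset.mem_univ _) h

lemma const_of_sub_period {p : ℕ} (hp : p.Prime) {α : Type*} (x : ZMod p) (hx : x ≠ 0)
    (c : ZMod p → α) (h : ∀ i, c (i - x) = c i) : ∀ i, c i = c 0 := by
  haveI : Fact p.Prime := ⟨hp⟩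
  have key : ∀ m : ℕ, c ((m : ZMod p) * x) = c 0 := by
    intro m
    induction m with
    | zero => simp
    | succ m ih =>
      push_cast
      rw [← h ((((m : ℕ) : ZMod p) + 1) * x)]
      have e : (((m : ℕ) : ZMod p) + 1) * x - x = (m : ZMod p) * x := by ring
      rw [e, ih]
  intro i
  have hinv : ((i * x⁻¹).val : ZMod p) * x = i := by
    rw [ZMod.natCast_val, ZMod.cast_id]
    field_simp
  rw [← hinv, key]

lemma trace_shiftT_pow_zero (d N : ℕ) [NeZero N] (j : ℕ) (hj : (j : Fin N) = 0) :
    Matrix.trace (shiftT d N ^ j) = (d : ℂ) ^ N := by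
  rw [shiftT_pow]
  simp only [Matrix.trace, Matrix.diag, Matrix.of_apply, hj, sub_zero]
  simp only [if_pos rfl, Finset.sum_const, Finset.card_univ, nsmul_eq_mul, mul_one]
  simp [Fintype.card_fun]

lemma trace_shiftT_pow_ne (d n : ℕ) (hN : (n + 1).Prime) (j : ℕ)
    (hj : (j : Fin (n + 1)) ≠ 0) :
    Matrix.trace (shiftT d (n + 1) ^ j) = (d : ℂ) := by
  rw [shiftT_pow]
  simp only [Matrix.trace, Matrix.diag, Matrix.of_apply]
  rw [Finset.sum_boole]
  have himg : (univ.filter fun r : Fin (n + 1) → Fin d =>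
      r = fun i => r (i - (j : Fin (n + 1)))) =
      Finset.image (fun a : Fin d => (fun _ => a : Fin (n + 1) → Fin d)) univ := by
    ext r
    simp only [Finset.mem_filter, Finset.mem_univ, true_and, Finset.mem_image]
    constructor
    · intro hr
      refine ⟨r 0, ?_⟩
      funext i
      have hper : ∀ i : Fin (n + 1), r (i - (j : Fin (n + 1))) = r i :=
        fun i => (congrFun hr i).symm
      exact (const_of_sub_period (p := n + 1) hN
        (show ZMod (n + 1) from (j : Fin (n + 1))) hj r hper i).symm
    · rintro ⟨a, rfl⟩
      rfl
  rw [himg, Finset.card_image_of_injective _ (fun a b hab => congrFun hab 0)]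
  simp

/-- For `N` prime: `Tr(T_k) = d^N + d(N-1)` if `k = 0`, and `Tr(T_k) = d^N - d` otherwise. -/
theorem stmt_3 (d N k : ℕ) [NeZero N] (hN : N.Prime) (hk : k < N) :
    Matrix.trace (momProj d N k) =
      if k = 0 then (d : ℂ) ^ N + (d : ℂ) * ((N : ℂ) - 1) else (d : ℂ) ^ N - (d : ℂ) := by
  obtain ⟨n, rfl⟩ := Nat.exists_eq_succ_of_ne_zero (NeZero.ne N)
  set N := n + 1 with hNdef
  have hN0 : (N : ℂ) ≠ 0 := Nat.cast_ne_zero.mpr (NeZero.ne N)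
  rw [momProj, Matrix.trace_sum]
  simp only [Matrix.trace_smul, smul_eq_mul]
  have htr : ∀ j ∈ Finset.range N, Matrix.trace (shiftT d N ^ j) =
      (d : ℂ) + (if j = 0 then (d : ℂ) ^ N - d else 0) := by
    intro j hj
    rw [Finset.mem_range] at hj
    by_cases h0 : j = 0
    · subst h0
      rw [trace_shiftT_pow_zero d N 0 (by simp)]
      ring_nf
      simp
    · rw [trace_shiftT_pow_ne d n hN j ?_, if_neg h0, add_zero]
      intro hz
      rw [Fin.natCast_eq_zero] at hz
      have := Nat.le_of_dvd (Nat.pos_of_ne_zero h0) hz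
      omega
  rw [Finset.sum_congr rfl (fun j hj => by rw [htr j hj])]
  simp only [mul_add, Finset.sum_add_distrib, mul_ite, mul_zero]
  rw [Finset.sum_ite_eq' (Finset.range N) 0]
  rw [if_pos (Finset.mem_range.mpr (Nat.pos_of_ne_zero (NeZero.ne N)))]
  simp only [Nat.cast_zero, mul_zero, zero_mul, zero_div, Complex.exp_zero, one_mul]
  by_cases hk0 : k = 0
  · subst hk0
    simp only [Nat.cast_zero, mul_zero, zero_div, Complex.exp_zero, one_mul,
      Finset.sum_const, Finset.card_range, nsmul_eq_mul, if_true]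
    rw [pow_succ]
    push_cast
    ring
  · rw [if_neg hk0]
    have hsum : ∑ j ∈ Finset.range N,
        Complex.exp (2 * (Real.pi : ℂ) * Complex.I * (j : ℂ) * (k : ℂ) / (N : ℂ)) * (d : ℂ)
        = 0 := by
      rw [← Finset.sum_mul]
      have hroot : IsPrimitiveRoot (Complex.exp (2 * (Real.pi : ℂ) * Complex.I / N) ^ k) N :=
        (Complex.isPrimitiveRoot_exp N (NeZero.ne N)).pow_of_coprime k
          ((Nat.Prime.coprime_iff_not_dvd hN).mpr (fun hdvd =>
            absurd (Nat.le_of_dvd (Nat.pos_of_ne_zero hk0) hdvd) (by omega))).symm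
      have hterm : ∀ j : ℕ,
          Complex.exp (2 * (Real.pi : ℂ) * Complex.I * (j : ℂ) * (k : ℂ) / (N : ℂ)) =
          (Complex.exp (2 * (Real.pi : ℂ) * Complex.I / N) ^ k) ^ j := by
        intro j
        rw [← pow_mul, ← Complex.exp_nat_mul]
        congr 1
        push_cast
        ring
      rw [Finset.sum_congr rfl (fun j _ => hterm j), hroot.geom_sum_eq_zero hN.one_lt,
        zero_mul]
    rw [hsum, pow_succ]
    ring
end

section
/- Split the N sites into a subsystem A of size N_A and B of size N_B = N - N_A. The partial trace over B of the cyclic shift operator T on (ℂ^2)^{⊗N} equals the cyclic shift operator T_A on (ℂ^2)^{⊗N_A}: Tr_B(T) = T_A. -/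
open Matrix

theorem valmk {n a : ℕ} (h : a < n) : (⟨a, h⟩ : Fin n).val = a := rfl

theorem subone (n : ℕ) [NeZero n] (j : Fin n) :
    (j - 1).val = if j.val = 0 then n - 1 else j.val - 1 := by
  have h1 : (1 : Fin n).val = 1 % n := rfl
  rw [Fin.sub_def]
  simp only [h1]
  have := j.isLt
  have hn := Nat.pos_of_ne_zero (NeZero.ne n)
  rcases eq_or_lt_of_le (show 1 ≤ n from hn) with h | h
  · have h0 : n = 1 := h.symm
    subst h0; simp
  · have h2 : 1 % n = 1 := Nat.mod_eq_of_lt h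
    rw [h2]
    split <;> rename_i hj
    · rw [hj, Nat.add_zero, Nat.mod_eq_of_lt (by omega)]
    · have he : n - 1 + j.val = n + (j.val - 1) := by omega
      rw [he, Nat.add_mod_left, Nat.mod_eq_of_lt (by omega)]

theorem append_lt {m n : ℕ} (a : Fin m → Fin 2) (b : Fin n → Fin 2) (j : Fin (m+n))
    (h : j.val < m) : Fin.append a b j = a ⟨j.1, h⟩ := by
  unfold Fin.append Fin.addCases
  simp only [eq_rec_constant]
  rw [dif_pos h]; rfl

theorem append_ge {m n : ℕ} (a : Fin m → Fin 2) (b : Fin n → Fin 2) (j : Fin (m+n))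
    (h : ¬ j.val < m) : Fin.append a b j = b ⟨j.1 - m, by omega⟩ := by
  unfold Fin.append Fin.addCases
  simp only [eq_rec_constant]
  rw [dif_neg h]; rfl

theorem appc_a {m n : ℕ} (a : Fin m → Fin 2) (b : Fin n → Fin 2) (j : Fin (m+n))
    (t : Fin m) (h : j.val = t.val) : Fin.append a b j = a t := by
  have ht := t.isLt
  rw [append_lt a b j (by omega)]
  congr 1
  exact Fin.ext h

theorem appc_b {m n : ℕ} (a : Fin m → Fin 2) (b : Fin n → Fin 2) (j : Fin (m+n))
    (t : Fin n) (h : j.val = m + t.val) : Fin.append a b j = b t := by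
  have ht := t.isLt
  rw [append_ge a b j (by omega)]
  congr 1
  exact Fin.ext (show j.val - m = t.val by omega)

theorem key (NA NB : ℕ) [NeZero NA] [NeZero NB] [NeZero (NA + NB)]
    (a a' : Fin NA → Fin 2) (b : Fin NB → Fin 2) :
    (Fin.append a b = fun j => Fin.append a' b (j - 1)) ↔
      ((a = fun j => a' (j - 1)) ∧
        b = fun _ => a' ⟨NA - 1, by have := Nat.pos_of_ne_zero (NeZero.ne NA); omega⟩) := by
  have hNA := Nat.pos_of_ne_zero (NeZero.ne NA)
  have hNB := Nat.pos_of_ne_zero (NeZero.ne NB)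
  constructor
  · intro h
    rw [funext_iff] at h
    have hb : ∀ t : ℕ, ∀ (ht : t < NB), b ⟨t, ht⟩ = a' ⟨NA - 1, by omega⟩ := by
      intro t
      induction t with
      | zero =>
        intro ht
        have hj := h ⟨NA, by omega⟩
        have hv : ((⟨NA, by omega⟩ : Fin (NA + NB)) - 1).val = NA - 1 := by
          rw [subone]; simp only [valmk]; rw [if_neg (by omega)]
        rw [appc_b a b _ ⟨0, ht⟩ (by simp only [valmk]; try omega)] at hj
        rw [appc_a a' b _ ⟨NA - 1, by omega⟩ (by simp only [hv, valmk]; try omega)] at hj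
        exact hj
      | succ p ih =>
        intro ht
        have hj := h ⟨NA + p + 1, by omega⟩
        have hv : ((⟨NA + p + 1, by omega⟩ : Fin (NA + NB)) - 1).val = NA + p := by
          rw [subone]; simp only [valmk]; rw [if_neg (by omega)]; omega
        rw [appc_b a b _ ⟨p + 1, ht⟩ (by simp only [valmk]; try omega)] at hj
        rw [appc_b a' b _ ⟨p, by omega⟩ (by simp only [hv, valmk]; try omega)] at hj
        rw [hj]
        exact ih (by omega)
    refine ⟨?_, ?_⟩
    · funext i
      rcases Nat.eq_zero_or_pos i.val with hi | hi
      · have hj := h ⟨i.val, by omega⟩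
        have hv : ((⟨i.val, by omega⟩ : Fin (NA + NB)) - 1).val = NA + NB - 1 := by
          rw [subone]; simp only [valmk]; rw [if_pos hi]
        rw [appc_a a b _ i (by simp only [valmk])] at hj
        rw [appc_b a' b _ ⟨NB - 1, by omega⟩ (by simp only [hv, valmk]; try omega)] at hj
        rw [hb (NB - 1) (by omega)] at hj
        rw [hj]
        congr 1
        exact Fin.ext (show NA - 1 = ((i : Fin NA) - 1).val by rw [subone, if_pos hi])
      · have hj := h ⟨i.val, by omega⟩
        have hv : ((⟨i.val, by omega⟩ : Fin (NA + NB)) - 1).val = i.val - 1 := by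
          rw [subone]; simp only [valmk]; rw [if_neg (by omega)]
        have h2 : ((i : Fin NA) - 1).val = i.val - 1 := by
          rw [subone, if_neg (by omega)]
        rw [appc_a a b _ i (by simp only [valmk])] at hj
        rw [appc_a a' b _ (i - 1) (by rw [hv, h2])] at hj
        exact hj
    · funext k
      have := hb k.val k.isLt
      rwa [show (⟨k.val, k.isLt⟩ : Fin NB) = k from Fin.ext rfl] at this
  · rintro ⟨ha, hb⟩
    funext j
    rcases Nat.lt_or_ge j.val NA with hj | hj
    · rcases Nat.eq_zero_or_pos j.val with h0 | h0
      · have hv : (j - 1).val = NA + NB - 1 := by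
          rw [subone, if_pos h0]
        rw [appc_a a b j ⟨j.val, hj⟩ rfl]
        rw [appc_b a' b (j - 1) ⟨NB - 1, by omega⟩ (by simp only [hv, valmk]; try omega)]
        simp only [ha, hb]
        congr 1
        exact Fin.ext (show ((⟨j.val, hj⟩ : Fin NA) - 1).val = NA - 1 by
          rw [subone]; simp only [valmk]; rw [if_pos h0])
      · have hv : (j - 1).val = j.val - 1 := by
          rw [subone, if_neg (by omega)]
        rw [appc_a a b j ⟨j.val, hj⟩ rfl]
        rw [appc_a a' b (j - 1) ⟨j.val - 1, by omega⟩ (by simp only [hv, valmk]; try omega)]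
        simp only [ha]
        congr 1
        exact Fin.ext (show ((⟨j.val, hj⟩ : Fin NA) - 1).val = j.val - 1 by
          rw [subone]; simp only [valmk]; rw [if_neg (by omega)])
    · rcases Nat.eq_or_lt_of_le hj with h0 | h0
      · have hv : (j - 1).val = NA - 1 := by
          rw [subone, if_neg (by omega)]; omega
        rw [appc_b a b j ⟨j.val - NA, by omega⟩ (by simp only [valmk]; try omega)]
        rw [appc_a a' b (j - 1) ⟨NA - 1, by omega⟩ (by simp only [hv, valmk]; try omega)]
        simp only [hb]
      · have hv : (j - 1).val = j.val - 1 := by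
          rw [subone, if_neg (by omega)]
        rw [appc_b a b j ⟨j.val - NA, by omega⟩ (by simp only [valmk]; try omega)]
        rw [appc_b a' b (j - 1) ⟨j.val - 1 - NA, by omega⟩ (by simp only [hv, valmk]; try omega)]
        simp only [hb]


/-- Partial trace over the last `N_B` qubits (subsystem `B`) of an operator on
`N_A + N_B` qubits: `Tr_B(X) = Σ_b (I_A ⊗ ⟨b|) X (I_A ⊗ |b⟩)`. -/
noncomputable def ptraceB (NA NB : ℕ)
    (X : Matrix (Fin (NA + NB) → Fin 2) (Fin (NA + NB) → Fin 2) ℂ) :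
    Matrix (Fin NA → Fin 2) (Fin NA → Fin 2) ℂ :=
  Matrix.of fun a a' => ∑ b : Fin NB → Fin 2, X (Fin.append a b) (Fin.append a' b)

/-- The partial trace over `B` of the cyclic shift on `N = N_A + N_B` qubits equals
the cyclic shift on the `N_A` qubits of `A`: `Tr_B(T) = T_A`. -/
theorem stmt_5 (NA NB : ℕ) [NeZero NA] [NeZero NB] [NeZero (NA + NB)] :
    ptraceB NA NB (shiftT 2 (NA + NB)) = shiftT 2 NA := by
  ext a a'
  simp only [ptraceB, shiftT, Matrix.of_apply]
  rw [Finset.sum_congr rfl (fun b _ => if_congr (key NA NB a a' b) rfl rfl)]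
  by_cases hQ : a = fun j => a' (j - 1)
  · simp [hQ, Finset.sum_ite_eq']
  · simp [hQ]
end

section
/- Let U act on a bipartite space H_A ⊗ H_B with dim H_A = dim H_B = d, and let P = O_1 ⊗ I, Q = I ⊗ O_2 with O_1, O_2 drawn independently from the unit-normalized GUE on d×d matrices. Then the averaged four-point correlator satisfies E[Tr(U† P U Q U† P U Q)]/d² = (1/d²) Tr(S_AA U^{†⊗2} S_AA U^{⊗2}), where S_AA is the swap of the two A-factors in (H_A ⊗ H_B)^{⊗2}, and the averaged two-point correlator E[Tr(U† P² U Q²)]/d² = d². -/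
open MeasureTheory Matrix
open scoped Kronecker

noncomputable instance matrixMeasurableSpace {m n : Type*} :
    MeasurableSpace (Matrix m n ℂ) :=
  inferInstanceAs (MeasurableSpace (m → n → ℂ))

/-- The swap operator `F` on `ℂ^d ⊗ ℂ^d`. -/
noncomputable def swapM (d : ℕ) : Matrix (Fin d × Fin d) (Fin d × Fin d) ℂ :=
  Matrix.of fun r c => if r = Prod.swap c then 1 else 0

/-- The operator `S_AA` on `(H_A ⊗ H_B)^{⊗2}` swapping the `A`-components of the two
replicas. -/
noncomputable def SAA (d : ℕ) :
    Matrix ((Fin d × Fin d) × (Fin d × Fin d)) ((Fin d × Fin d) × (Fin d × Fin d)) ℂ :=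
  Matrix.of fun r c => if r = ((c.2.1, c.1.2), (c.1.1, c.2.2)) then 1 else 0

section Aux

/-- The full swap operator on the doubled space. -/
noncomputable def SfullM (d : ℕ) :
    Matrix ((Fin d × Fin d) × (Fin d × Fin d)) ((Fin d × Fin d) × (Fin d × Fin d)) ℂ :=
  Matrix.of fun r c => if r = Prod.swap c then 1 else 0

/-- The operator `S_BB` swapping the `B`-components of the two replicas. -/
noncomputable def SBB (d : ℕ) :
    Matrix ((Fin d × Fin d) × (Fin d × Fin d)) ((Fin d × Fin d) × (Fin d × Fin d)) ℂ :=
  Matrix.of fun r c => if r = ((c.1.1, c.2.2), (c.2.1, c.1.2)) then 1 else 0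

lemma SBB_mul_Sfull (d : ℕ) : SBB d * SfullM d = SAA d := by
  ext r c
  simp [Matrix.mul_apply, SBB, SfullM, SAA, Finset.sum_ite_eq' Finset.univ (Prod.swap c)]

lemma trace_sq (d : ℕ)
    (M : Matrix (Fin d × Fin d) (Fin d × Fin d) ℂ) :
    Matrix.trace (M * M) = Matrix.trace (SfullM d * (M ⊗ₖ M)) := by
  classical
  simp only [Matrix.trace, Matrix.diag, Matrix.mul_apply, SfullM, Matrix.of_apply,
    Matrix.kroneckerMap_apply, ite_mul, one_mul, zero_mul]
  have h : ∀ x : (Fin d × Fin d) × (Fin d × Fin d),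
      (∑ y : (Fin d × Fin d) × (Fin d × Fin d),
        if x = y.swap then M y.1 x.1 * M y.2 x.2 else 0) = M x.2 x.1 * M x.1 x.2 := by
    intro x
    rw [Finset.sum_eq_single x.swap]
    · simp
    · intro b _ hb
      rw [if_neg]
      intro h
      exact hb (by simpa using congrArg Prod.swap h.symm)
    · simp
  simp only [h]
  conv_rhs => rw [Fintype.sum_prod_type]
  exact Finset.sum_congr rfl fun p _ => Finset.sum_congr rfl fun q _ => mul_comm _ _

lemma cyc4 {n : Type*} [Fintype n] (A B C D : Matrix n n ℂ) :
    Matrix.trace (A * B * C * D) = Matrix.trace (D * A * B * C) := by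
  rw [Matrix.trace_mul_comm]; simp only [mul_assoc]

lemma cyc5 {n : Type*} [Fintype n] (A B R C D : Matrix n n ℂ) :
    Matrix.trace (A * B * R * C * D) = Matrix.trace (C * D * A * B * R) := by
  rw [show A*B*R*C*D = (A*B*R)*(C*D) by simp only [mul_assoc], Matrix.trace_mul_comm]
  simp only [mul_assoc]

lemma integral_trace_mul {α : Type*} [MeasurableSpace α] {J : Type*} [Fintype J]
    (μ : MeasureTheory.Measure α) (W G : Matrix J J ℂ) (g : α → Matrix J J ℂ)
    (hint : ∀ i l, MeasureTheory.Integrable (fun O => g O i l) μ)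
    (hval : ∀ i l, (∫ O, g O i l ∂μ) = G i l) :
    (∫ O, Matrix.trace (W * g O) ∂μ) = Matrix.trace (W * G) := by
  have h : ∀ X : Matrix J J ℂ, Matrix.trace (W * X) = ∑ l, ∑ i, W l i * X i l := by
    intro X
    simp [Matrix.trace, Matrix.mul_apply, Matrix.diag]
  simp only [h]
  refine (MeasureTheory.integral_finset_sum _
    (fun l _ => integrable_finset_sum _ (fun i _ => (hint i l).const_mul _))).trans ?_
  refine Finset.sum_congr rfl fun l _ => ?_
  refine (MeasureTheory.integral_finset_sum _ (fun i _ => (hint i l).const_mul _)).trans ?_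
  refine Finset.sum_congr rfl fun i _ => ?_
  rw [MeasureTheory.integral_const_mul, hval]

end Aux

section Entries

variable {d : ℕ}

lemma entryQ (O : Matrix (Fin d) (Fin d) ℂ)
    (i l : (Fin d × Fin d) × (Fin d × Fin d)) :
    (((1 : Matrix (Fin d) (Fin d) ℂ) ⊗ₖ O) ⊗ₖ ((1 : Matrix (Fin d) (Fin d) ℂ) ⊗ₖ O)) i l
      = ((if i.1.1 = l.1.1 then (1:ℂ) else 0) * (if i.2.1 = l.2.1 then (1:ℂ) else 0)) *
        (O ⊗ₖ O) (i.1.2, i.2.2) (l.1.2, l.2.2) := by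
  simp only [Matrix.kroneckerMap_apply, Matrix.one_apply]
  ring

lemma entryP (O : Matrix (Fin d) (Fin d) ℂ)
    (i l : (Fin d × Fin d) × (Fin d × Fin d)) :
    ((O ⊗ₖ (1 : Matrix (Fin d) (Fin d) ℂ)) ⊗ₖ (O ⊗ₖ (1 : Matrix (Fin d) (Fin d) ℂ))) i l
      = ((if i.1.2 = l.1.2 then (1:ℂ) else 0) * (if i.2.2 = l.2.2 then (1:ℂ) else 0)) *
        (O ⊗ₖ O) (i.1.1, i.2.1) (l.1.1, l.2.1) := by
  simp only [Matrix.kroneckerMap_apply, Matrix.one_apply]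
  ring

lemma valQ (i l : (Fin d × Fin d) × (Fin d × Fin d)) :
    ((if i.1.1 = l.1.1 then (1:ℂ) else 0) * (if i.2.1 = l.2.1 then (1:ℂ) else 0)) *
      swapM d ((i.1.2, i.2.2)) ((l.1.2, l.2.2)) = SBB d i l := by
  rcases i with ⟨⟨i11, i12⟩, ⟨i21, i22⟩⟩
  rcases l with ⟨⟨l11, l12⟩, ⟨l21, l22⟩⟩
  simp only [swapM, SBB, Matrix.of_apply, Prod.swap, Prod.mk.injEq, Prod.ext_iff]
  split_ifs <;> simp_all

lemma valP (i l : (Fin d × Fin d) × (Fin d × Fin d)) :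
    ((if i.1.2 = l.1.2 then (1:ℂ) else 0) * (if i.2.2 = l.2.2 then (1:ℂ) else 0)) *
      swapM d ((i.1.1, i.2.1)) ((l.1.1, l.2.1)) = SAA d i l := by
  rcases i with ⟨⟨i11, i12⟩, ⟨i21, i22⟩⟩
  rcases l with ⟨⟨l11, l12⟩, ⟨l21, l22⟩⟩
  simp only [swapM, SAA, Matrix.of_apply, Prod.swap, Prod.mk.injEq, Prod.ext_iff]
  split_ifs <;> simp_all

lemma entryQ2 (O : Matrix (Fin d) (Fin d) ℂ) (i l : Fin d × Fin d) :
    ((1 : Matrix (Fin d) (Fin d) ℂ) ⊗ₖ (O * O)) i l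
      = (if i.1 = l.1 then (1:ℂ) else 0) * (O * O) i.2 l.2 := by
  simp [Matrix.kroneckerMap_apply, Matrix.one_apply]

lemma entryP2 (O : Matrix (Fin d) (Fin d) ℂ) (i l : Fin d × Fin d) :
    ((O * O) ⊗ₖ (1 : Matrix (Fin d) (Fin d) ℂ)) i l
      = (if i.2 = l.2 then (1:ℂ) else 0) * (O * O) i.1 l.1 := by
  simp only [Matrix.kroneckerMap_apply, Matrix.one_apply]
  ring

lemma valQ2 (i l : Fin d × Fin d) :
    (if i.1 = l.1 then (1:ℂ) else 0) * ((d : ℂ) • (1 : Matrix (Fin d) (Fin d) ℂ)) i.2 l.2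
      = ((d : ℂ) • (1 : Matrix ((Fin d) × (Fin d)) ((Fin d) × (Fin d)) ℂ)) i l := by
  rcases i with ⟨i1, i2⟩; rcases l with ⟨l1, l2⟩
  simp only [Matrix.smul_apply, Matrix.one_apply, smul_eq_mul, Prod.mk.injEq]
  split_ifs <;> simp_all

lemma valP2 (i l : Fin d × Fin d) :
    (if i.2 = l.2 then (1:ℂ) else 0) * ((d : ℂ) • (1 : Matrix (Fin d) (Fin d) ℂ)) i.1 l.1
      = ((d : ℂ) • (1 : Matrix ((Fin d) × (Fin d)) ((Fin d) × (Fin d)) ℂ)) i l := by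
  rcases i with ⟨i1, i2⟩; rcases l with ⟨l1, l2⟩
  simp only [Matrix.smul_apply, Matrix.one_apply, smul_eq_mul, Prod.mk.injEq]
  split_ifs <;> simp_all

end Entries

/-- For `P = O₁ ⊗ I`, `Q = I ⊗ O₂` with `O₁, O₂` independent unit-normalized GUE matrices
(unitarily invariant Hermitian ensembles with `E[O ⊗ O] = F` and `E[O²] = dI`):
`E[Tr(U†PUQU†PUQ)]/d² = (1/d²) Tr(S_AA U^{†⊗2} S_AA U^{⊗2})` and
`E[Tr(U†P²UQ²)]/d² = d²`. -/
theorem stmt_12 (d : ℕ) (hd : 0 < d)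
    (U : Matrix (Fin d × Fin d) (Fin d × Fin d) ℂ)
    (hU : U ∈ Matrix.unitaryGroup (Fin d × Fin d) ℂ)
    (μ₁ μ₂ : Measure (Matrix (Fin d) (Fin d) ℂ))
    [IsProbabilityMeasure μ₁] [IsProbabilityMeasure μ₂]
    (h₁herm : ∀ᵐ O ∂μ₁, O.IsHermitian) (h₂herm : ∀ᵐ O ∂μ₂, O.IsHermitian)
    (h₁kron : ∀ p q, (∫ O, (O ⊗ₖ O) p q ∂μ₁) = swapM d p q)
    (h₂kron : ∀ p q, (∫ O, (O ⊗ₖ O) p q ∂μ₂) = swapM d p q)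
    (h₁sq : ∀ i j, (∫ O, (O * O) i j ∂μ₁) =
      ((d : ℂ) • (1 : Matrix (Fin d) (Fin d) ℂ)) i j)
    (h₂sq : ∀ i j, (∫ O, (O * O) i j ∂μ₂) =
      ((d : ℂ) • (1 : Matrix (Fin d) (Fin d) ℂ)) i j)
    (h₁intk : ∀ p q, Integrable (fun O => (O ⊗ₖ O) p q) μ₁)
    (h₂intk : ∀ p q, Integrable (fun O => (O ⊗ₖ O) p q) μ₂)
    (h₁ints : ∀ i j, Integrable (fun O => (O * O) i j) μ₁)
    (h₂ints : ∀ i j, Integrable (fun O => (O * O) i j) μ₂) :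
    ((d : ℂ) ^ 2)⁻¹ *
        (∫ O₁, ∫ O₂, Matrix.trace
          (Uᴴ * (O₁ ⊗ₖ (1 : Matrix (Fin d) (Fin d) ℂ)) * U *
            ((1 : Matrix (Fin d) (Fin d) ℂ) ⊗ₖ O₂) *
            Uᴴ * (O₁ ⊗ₖ (1 : Matrix (Fin d) (Fin d) ℂ)) * U *
            ((1 : Matrix (Fin d) (Fin d) ℂ) ⊗ₖ O₂)) ∂μ₂ ∂μ₁)
      = ((d : ℂ) ^ 2)⁻¹ * Matrix.trace (SAA d * (Uᴴ ⊗ₖ Uᴴ) * SAA d * (U ⊗ₖ U)) ∧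
    ((d : ℂ) ^ 2)⁻¹ *
        (∫ O₁, ∫ O₂, Matrix.trace
          (Uᴴ * (O₁ ⊗ₖ (1 : Matrix (Fin d) (Fin d) ℂ)) *
            (O₁ ⊗ₖ (1 : Matrix (Fin d) (Fin d) ℂ)) * U *
            ((1 : Matrix (Fin d) (Fin d) ℂ) ⊗ₖ O₂) *
            ((1 : Matrix (Fin d) (Fin d) ℂ) ⊗ₖ O₂)) ∂μ₂ ∂μ₁)
      = (d : ℂ) ^ 2 := by
  have hdC : (d : ℂ) ≠ 0 := Nat.cast_ne_zero.mpr hd.ne'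
  -- integrability and values for the four entry families
  have hintQ : ∀ i l, Integrable (fun O =>
      (((1 : Matrix (Fin d) (Fin d) ℂ) ⊗ₖ O) ⊗ₖ ((1 : Matrix (Fin d) (Fin d) ℂ) ⊗ₖ O)) i l) μ₂ := by
    intro i l
    simp only [entryQ]
    exact (h₂intk _ _).const_mul _
  have hvalQ : ∀ i l, (∫ O,
      (((1 : Matrix (Fin d) (Fin d) ℂ) ⊗ₖ O) ⊗ₖ ((1 : Matrix (Fin d) (Fin d) ℂ) ⊗ₖ O)) i l ∂μ₂)
      = SBB d i l := by
    intro i l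
    simp only [entryQ]
    rw [integral_const_mul, h₂kron]
    exact valQ i l
  have hintP : ∀ i l, Integrable (fun O =>
      ((O ⊗ₖ (1 : Matrix (Fin d) (Fin d) ℂ)) ⊗ₖ (O ⊗ₖ (1 : Matrix (Fin d) (Fin d) ℂ))) i l) μ₁ := by
    intro i l
    simp only [entryP]
    exact (h₁intk _ _).const_mul _
  have hvalP : ∀ i l, (∫ O,
      ((O ⊗ₖ (1 : Matrix (Fin d) (Fin d) ℂ)) ⊗ₖ (O ⊗ₖ (1 : Matrix (Fin d) (Fin d) ℂ))) i l ∂μ₁)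
      = SAA d i l := by
    intro i l
    simp only [entryP]
    rw [integral_const_mul, h₁kron]
    exact valP i l
  have hintQ2 : ∀ i l, Integrable (fun O =>
      ((1 : Matrix (Fin d) (Fin d) ℂ) ⊗ₖ (O * O)) i l) μ₂ := by
    intro i l
    simp only [entryQ2]
    exact (h₂ints _ _).const_mul _
  have hvalQ2 : ∀ i l, (∫ O, ((1 : Matrix (Fin d) (Fin d) ℂ) ⊗ₖ (O * O)) i l ∂μ₂)
      = ((d : ℂ) • (1 : Matrix ((Fin d) × (Fin d)) ((Fin d) × (Fin d)) ℂ)) i l := by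
    intro i l
    simp only [entryQ2]
    rw [integral_const_mul, h₂sq]
    exact valQ2 i l
  have hintP2 : ∀ i l, Integrable (fun O =>
      ((O * O) ⊗ₖ (1 : Matrix (Fin d) (Fin d) ℂ)) i l) μ₁ := by
    intro i l
    simp only [entryP2]
    exact (h₁ints _ _).const_mul _
  have hvalP2 : ∀ i l, (∫ O, ((O * O) ⊗ₖ (1 : Matrix (Fin d) (Fin d) ℂ)) i l ∂μ₁)
      = ((d : ℂ) • (1 : Matrix ((Fin d) × (Fin d)) ((Fin d) × (Fin d)) ℂ)) i l := by
    intro i l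
    simp only [entryP2]
    rw [integral_const_mul, h₁sq]
    exact valP2 i l
  constructor
  · -- first part
    congr 1
    have hM : ∀ (O₁ O₂ : Matrix (Fin d) (Fin d) ℂ),
        Matrix.trace (Uᴴ * (O₁ ⊗ₖ (1 : Matrix (Fin d) (Fin d) ℂ)) * U *
            ((1 : Matrix (Fin d) (Fin d) ℂ) ⊗ₖ O₂) *
            Uᴴ * (O₁ ⊗ₖ (1 : Matrix (Fin d) (Fin d) ℂ)) * U *
            ((1 : Matrix (Fin d) (Fin d) ℂ) ⊗ₖ O₂))
          = Matrix.trace ((SfullM d * (Uᴴ ⊗ₖ Uᴴ) *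
              ((O₁ ⊗ₖ (1 : Matrix (Fin d) (Fin d) ℂ)) ⊗ₖ (O₁ ⊗ₖ (1 : Matrix (Fin d) (Fin d) ℂ))) *
              (U ⊗ₖ U)) *
              (((1 : Matrix (Fin d) (Fin d) ℂ) ⊗ₖ O₂) ⊗ₖ ((1 : Matrix (Fin d) (Fin d) ℂ) ⊗ₖ O₂))) := by
      intro O₁ O₂
      rw [show Uᴴ * (O₁ ⊗ₖ (1 : Matrix (Fin d) (Fin d) ℂ)) * U *
            ((1 : Matrix (Fin d) (Fin d) ℂ) ⊗ₖ O₂) *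
            Uᴴ * (O₁ ⊗ₖ (1 : Matrix (Fin d) (Fin d) ℂ)) * U *
            ((1 : Matrix (Fin d) (Fin d) ℂ) ⊗ₖ O₂)
          = (Uᴴ * (O₁ ⊗ₖ (1 : Matrix (Fin d) (Fin d) ℂ)) * U *
              ((1 : Matrix (Fin d) (Fin d) ℂ) ⊗ₖ O₂)) *
            (Uᴴ * (O₁ ⊗ₖ (1 : Matrix (Fin d) (Fin d) ℂ)) * U *
              ((1 : Matrix (Fin d) (Fin d) ℂ) ⊗ₖ O₂)) by simp only [mul_assoc]]
      rw [trace_sq]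
      congr 1
      simp only [Matrix.mul_kronecker_mul, mul_assoc]
    have hInner : ∀ O₁ : Matrix (Fin d) (Fin d) ℂ,
        (∫ O₂, Matrix.trace
          (Uᴴ * (O₁ ⊗ₖ (1 : Matrix (Fin d) (Fin d) ℂ)) * U *
            ((1 : Matrix (Fin d) (Fin d) ℂ) ⊗ₖ O₂) *
            Uᴴ * (O₁ ⊗ₖ (1 : Matrix (Fin d) (Fin d) ℂ)) * U *
            ((1 : Matrix (Fin d) (Fin d) ℂ) ⊗ₖ O₂)) ∂μ₂)
        = Matrix.trace (((U ⊗ₖ U) * SBB d * SfullM d * (Uᴴ ⊗ₖ Uᴴ)) *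
            ((O₁ ⊗ₖ (1 : Matrix (Fin d) (Fin d) ℂ)) ⊗ₖ (O₁ ⊗ₖ (1 : Matrix (Fin d) (Fin d) ℂ)))) := by
      intro O₁
      simp only [hM]
      rw [integral_trace_mul μ₂ _ (SBB d) _ hintQ hvalQ]
      exact cyc5 (SfullM d) (Uᴴ ⊗ₖ Uᴴ)
        ((O₁ ⊗ₖ (1 : Matrix (Fin d) (Fin d) ℂ)) ⊗ₖ (O₁ ⊗ₖ (1 : Matrix (Fin d) (Fin d) ℂ)))
        (U ⊗ₖ U) (SBB d)
    simp only [hInner]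
    rw [integral_trace_mul μ₁ _ (SAA d) _ hintP hvalP]
    rw [show (U ⊗ₖ U) * SBB d * SfullM d * (Uᴴ ⊗ₖ Uᴴ) * SAA d
        = (U ⊗ₖ U) * SAA d * (Uᴴ ⊗ₖ Uᴴ) * SAA d by
      rw [mul_assoc (U ⊗ₖ U) (SBB d) (SfullM d), SBB_mul_Sfull]]
    rw [cyc4, cyc4, cyc4]
  · -- second part
    have hre : ∀ (O₁ O₂ : Matrix (Fin d) (Fin d) ℂ),
        Uᴴ * (O₁ ⊗ₖ (1 : Matrix (Fin d) (Fin d) ℂ)) *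
            (O₁ ⊗ₖ (1 : Matrix (Fin d) (Fin d) ℂ)) * U *
            ((1 : Matrix (Fin d) (Fin d) ℂ) ⊗ₖ O₂) *
            ((1 : Matrix (Fin d) (Fin d) ℂ) ⊗ₖ O₂)
          = (Uᴴ * ((O₁ * O₁) ⊗ₖ (1 : Matrix (Fin d) (Fin d) ℂ)) * U) *
            ((1 : Matrix (Fin d) (Fin d) ℂ) ⊗ₖ (O₂ * O₂)) := by
      intro O₁ O₂
      have e1 : (O₁ ⊗ₖ (1 : Matrix (Fin d) (Fin d) ℂ)) * (O₁ ⊗ₖ (1 : Matrix (Fin d) (Fin d) ℂ))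
          = (O₁ * O₁) ⊗ₖ (1 : Matrix (Fin d) (Fin d) ℂ) := by
        rw [← Matrix.mul_kronecker_mul, mul_one]
      have e2 : ((1 : Matrix (Fin d) (Fin d) ℂ) ⊗ₖ O₂) * ((1 : Matrix (Fin d) (Fin d) ℂ) ⊗ₖ O₂)
          = (1 : Matrix (Fin d) (Fin d) ℂ) ⊗ₖ (O₂ * O₂) := by
        rw [← Matrix.mul_kronecker_mul, mul_one]
      calc Uᴴ * (O₁ ⊗ₖ (1 : Matrix (Fin d) (Fin d) ℂ)) *
            (O₁ ⊗ₖ (1 : Matrix (Fin d) (Fin d) ℂ)) * U *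
            ((1 : Matrix (Fin d) (Fin d) ℂ) ⊗ₖ O₂) *
            ((1 : Matrix (Fin d) (Fin d) ℂ) ⊗ₖ O₂)
          = Uᴴ * ((O₁ ⊗ₖ (1 : Matrix (Fin d) (Fin d) ℂ)) * (O₁ ⊗ₖ (1 : Matrix (Fin d) (Fin d) ℂ))) * U *
            (((1 : Matrix (Fin d) (Fin d) ℂ) ⊗ₖ O₂) * ((1 : Matrix (Fin d) (Fin d) ℂ) ⊗ₖ O₂)) := by
            simp only [mul_assoc]
        _ = (Uᴴ * ((O₁ * O₁) ⊗ₖ (1 : Matrix (Fin d) (Fin d) ℂ)) * U) *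
            ((1 : Matrix (Fin d) (Fin d) ℂ) ⊗ₖ (O₂ * O₂)) := by rw [e1, e2]
    have hInner2 : ∀ O₁ : Matrix (Fin d) (Fin d) ℂ,
        (∫ O₂, Matrix.trace
          (Uᴴ * (O₁ ⊗ₖ (1 : Matrix (Fin d) (Fin d) ℂ)) *
            (O₁ ⊗ₖ (1 : Matrix (Fin d) (Fin d) ℂ)) * U *
            ((1 : Matrix (Fin d) (Fin d) ℂ) ⊗ₖ O₂) *
            ((1 : Matrix (Fin d) (Fin d) ℂ) ⊗ₖ O₂)) ∂μ₂)
        = (d : ℂ) * Matrix.trace ((U * Uᴴ) * ((O₁ * O₁) ⊗ₖ (1 : Matrix (Fin d) (Fin d) ℂ))) := by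
      intro O₁
      simp only [hre]
      rw [integral_trace_mul μ₂ _ ((d : ℂ) • (1 : Matrix ((Fin d) × (Fin d)) ((Fin d) × (Fin d)) ℂ))
        _ hintQ2 hvalQ2]
      rw [Matrix.mul_smul, Matrix.trace_smul, mul_one, smul_eq_mul]
      congr 1
      rw [Matrix.trace_mul_comm, ← mul_assoc]
    simp only [hInner2]
    rw [integral_const_mul]
    rw [integral_trace_mul μ₁ (U * Uᴴ)
      ((d : ℂ) • (1 : Matrix ((Fin d) × (Fin d)) ((Fin d) × (Fin d)) ℂ))
      _ hintP2 hvalP2]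
    have hUU : U * Uᴴ = 1 := by
      simpa [Matrix.star_eq_conjTranspose] using hU.2
    rw [hUU, one_mul, Matrix.trace_smul, Matrix.trace_one, smul_eq_mul]
    simp only [Fintype.card_prod, Fintype.card_fin]
    push_cast
    field_simp
end
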